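/- Let V be a real Hilbert space, let d ≥ 1, let B : V × V → ℝ be a bounded bilinear form that is coercive (there is μ > 0 with B(v,v) ≥ μ‖v‖² for all v ∈ V) and symmetric, let T : V → ℝ^d be a bounded linear map, and let c ∈ ℝ^{d×d} be a symmetric matrix. For each p ∈ ℝ^d let Q_p ∈ V be the unique element (given by the Lax–Milgram theorem) with B(v, Q_p) + (c·T(v))·p = 0 for all v ∈ V. Define R ∈ ℝ^{d×d} by pᵀ R y := −(c·y)·T(Q_p) for p, y ∈ ℝ^d (this expression is bilinear in (p, y)). Then R is symmetric: pᵀ R y = yᵀ R p for all p, y ∈ ℝ^d. -/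
import Mathlib

open Matrix

/-- Symmetry of the sensitivity matrix: for a bounded, coercive, symmetric bilinear form `B`
on a real Hilbert space `V`, a bounded linear `T : V → ℝ^d`, a symmetric matrix `c`, and `Q p`
the (unique, by Lax–Milgram) solution of `B(v, Q p) + (c·T v)·p = 0` for all `v`, the matrix `R`
defined by `pᵀ R y = −(c·y)·T(Q p)` is symmetric. -/
theorem stmt_17 {V : Type*} [NormedAddCommGroup V] [InnerProductSpace ℝ V] [CompleteSpace V]
    (d : ℕ) (hd : 1 ≤ d)
    (B : V →L[ℝ] V →L[ℝ] ℝ) (μ : ℝ) (hμ : 0 < μ)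
    (hcoercive : ∀ v : V, B v v ≥ μ * ‖v‖ ^ 2)
    (hsymm : ∀ u v : V, B u v = B v u)
    (T : V →L[ℝ] (Fin d → ℝ))
    (c : Matrix (Fin d) (Fin d) ℝ) (hc : cᵀ = c)
    (Q : (Fin d → ℝ) → V)
    (hQ : ∀ (p : Fin d → ℝ) (v : V), B v (Q p) + (c *ᵥ T v) ⬝ᵥ p = 0)
    (R : Matrix (Fin d) (Fin d) ℝ)
    (hR : ∀ p y : Fin d → ℝ, p ⬝ᵥ R *ᵥ y = -((c *ᵥ y) ⬝ᵥ T (Q p))) :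
    ∀ p y : Fin d → ℝ, p ⬝ᵥ R *ᵥ y = y ⬝ᵥ R *ᵥ p := by
  have key : ∀ p y : Fin d → ℝ, p ⬝ᵥ R *ᵥ y = B (Q p) (Q y) := by
    intro p y
    have h1 := hQ y (Q p)
    have h2 : (c *ᵥ y) ⬝ᵥ T (Q p) = (c *ᵥ T (Q p)) ⬝ᵥ y := by
      rw [dotProduct_comm, Matrix.dotProduct_mulVec, ← Matrix.mulVec_transpose, hc]
    rw [hR, h2]
    linarith
  intro p y
  rw [key, key, hsymm]
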